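/- For any finite poset P with minimal element 0̂ and any elements p ≤ q in P, the Möbius function value μ_P(p,q) equals the reduced Euler characteristic of the order complex of the open interval (p,q), i.e. μ_P(p,q) = Σ_{ω chain in (p,q)} (−1)^{|ω|−1}, where the empty chain contributes −1 (equivalently, the sum over nonempty chains ω of (−1)^{|ω|−1} equals μ_P(p,q) when p < q). -/

import Mathlib

open scoped Classical

section Aux

variable {P : Type*} [PartialOrder P] [Fintype P]

/-- Sum over nonempty chains in the open interval `(p,q)` of `(-1)^(card-1)`. -/
noncomputable def cSum (p q : P) : ℤ :=
  ∑ ω ∈ Finset.univ.filter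
      (fun ω : Finset P =>
        ω.Nonempty ∧ IsChain (· ≤ ·) (↑ω : Set P) ∧ ∀ a ∈ ω, p < a ∧ a < q),
    (-1 : ℤ) ^ (ω.card - 1)

/-- The greatest element of a finite chain (default `q`). -/
noncomputable def topOf (q : P) (ω : Finset P) : P :=
  if h : ∃ m, m ∈ ω ∧ ∀ x ∈ ω, x ≤ m then h.choose else q

lemma topOf_eq (q : P) {ω : Finset P} {r : P} (hr : r ∈ ω) (hmax : ∀ x ∈ ω, x ≤ r) :
    topOf q ω = r := by
  have h : ∃ m, m ∈ ω ∧ ∀ x ∈ ω, x ≤ m := ⟨r, hr, hmax⟩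
  rw [topOf, dif_pos h]
  exact le_antisymm (hmax _ h.choose_spec.1) (h.choose_spec.2 r hr)

lemma chain_exists_top {ω : Finset P} (hne : ω.Nonempty)
    (hc : IsChain (· ≤ ·) (↑ω : Set P)) : ∃ m, m ∈ ω ∧ ∀ x ∈ ω, x ≤ m := by
  obtain ⟨m, hm, hmax⟩ := ω.exists_maximal hne
  refine ⟨m, hm, fun x hx => ?_⟩
  by_cases hxm : x = m
  · exact hxm.le
  · rcases hc hx hm hxm with h | h
    · exact h
    · exact absurd (lt_of_le_of_ne h (fun e => hxm e.symm)) (fun hlt => lt_irrefl m (lt_of_lt_of_le hlt (hmax hx hlt.le)))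

lemma topOf_mem_spec {p q : P} {ω : Finset P}
    (hω : ω.Nonempty ∧ IsChain (· ≤ ·) (↑ω : Set P) ∧ ∀ a ∈ ω, p < a ∧ a < q) :
    topOf q ω ∈ ω ∧ ∀ x ∈ ω, x ≤ topOf q ω := by
  obtain ⟨m, hm, hmax⟩ := chain_exists_top hω.1 hω.2.1
  rw [topOf_eq q hm hmax]
  exact ⟨hm, hmax⟩

/-- The fiber of chains with top `r` sums to `1 - cSum p r`. -/
lemma fiber_sum (p q r : P) (hpr : p < r) (hrq : r < q) :
    ∑ ω ∈ (Finset.univ.filter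
        (fun ω : Finset P =>
          ω.Nonempty ∧ IsChain (· ≤ ·) (↑ω : Set P) ∧ ∀ a ∈ ω, p < a ∧ a < q)).filter
        (fun ω => topOf q ω = r),
      (-1 : ℤ) ^ (ω.card - 1) = 1 - cSum p r := by
  -- T : possibly-empty chains in (p, r)
  set T : Finset (Finset P) := Finset.univ.filter
      (fun σ : Finset P => IsChain (· ≤ ·) (↑σ : Set P) ∧ ∀ a ∈ σ, p < a ∧ a < r) with hT
  have key : ∑ ω ∈ (Finset.univ.filter
        (fun ω : Finset P =>
          ω.Nonempty ∧ IsChain (· ≤ ·) (↑ω : Set P) ∧ ∀ a ∈ ω, p < a ∧ a < q)).filter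
        (fun ω => topOf q ω = r),
      (-1 : ℤ) ^ (ω.card - 1) = ∑ σ ∈ T, (-1 : ℤ) ^ σ.card := by
    refine Finset.sum_bij' (fun ω _ => ω.erase r) (fun σ _ => insert r σ) ?_ ?_ ?_ ?_ ?_
    · -- erase lands in T
      intro ω hω
      simp only [Finset.mem_filter, Finset.mem_univ, true_and] at hω
      obtain ⟨⟨hne, hc, hmem⟩, htop⟩ := hω
      obtain ⟨hrmem, hmax⟩ := topOf_mem_spec ⟨hne, hc, hmem⟩
      rw [htop] at hrmem hmax
      simp only [hT, Finset.mem_filter, Finset.mem_univ, true_and]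
      refine ⟨hc.mono ?_, fun a ha => ?_⟩
      · exact_mod_cast Finset.coe_subset.mpr (ω.erase_subset r)
      · have ha' := Finset.mem_of_mem_erase ha
        have hane := Finset.ne_of_mem_erase ha
        exact ⟨(hmem a ha').1, lt_of_le_of_ne (hmax a ha') hane⟩
    · -- insert lands in source
      intro σ hσ
      simp only [hT, Finset.mem_filter, Finset.mem_univ, true_and] at hσ
      obtain ⟨hc, hmem⟩ := hσ
      have hrns : r ∉ σ := fun h => absurd (hmem r h).2 (lt_irrefl r)
      have hc' : IsChain (· ≤ ·) (↑(insert r σ) : Set P) := by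
        rw [Finset.coe_insert]
        exact hc.insert (fun b hb _ => Or.inr (hmem b hb).2.le)
      have hmem' : ∀ a ∈ insert r σ, p < a ∧ a < q := by
        intro a ha
        rcases Finset.mem_insert.mp ha with h | h
        · exact ⟨h ▸ hpr, h ▸ hrq⟩
        · exact ⟨(hmem a h).1, (hmem a h).2.trans hrq⟩
      have htop : topOf q (insert r σ) = r := by
        refine topOf_eq q (Finset.mem_insert_self r σ) (fun x hx => ?_)
        rcases Finset.mem_insert.mp hx with h | h
        · exact h.le
        · exact (hmem x h).2.le
      simp only [Finset.mem_filter, Finset.mem_univ, true_and]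
      exact ⟨⟨⟨r, Finset.mem_insert_self r σ⟩, hc', hmem'⟩, htop⟩
    · -- left inverse
      intro ω hω
      simp only [Finset.mem_filter, Finset.mem_univ, true_and] at hω
      obtain ⟨⟨hne, hc, hmem⟩, htop⟩ := hω
      obtain ⟨hrmem, _⟩ := topOf_mem_spec ⟨hne, hc, hmem⟩
      rw [htop] at hrmem
      exact Finset.insert_erase hrmem
    · -- right inverse
      intro σ hσ
      simp only [hT, Finset.mem_filter, Finset.mem_univ, true_and] at hσ
      have hrns : r ∉ σ := fun h => absurd (hσ.2 r h).2 (lt_irrefl r)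
      exact Finset.erase_insert hrns
    · -- values agree
      intro ω hω
      simp only [Finset.mem_filter, Finset.mem_univ, true_and] at hω
      obtain ⟨⟨hne, hc, hmem⟩, htop⟩ := hω
      obtain ⟨hrmem, _⟩ := topOf_mem_spec ⟨hne, hc, hmem⟩
      rw [htop] at hrmem
      rw [Finset.card_erase_of_mem hrmem]
  rw [key]
  -- Now split T into ∅ and nonempty chains
  have hTsplit : T = insert (∅ : Finset P)
      (Finset.univ.filter (fun ω : Finset P =>
        ω.Nonempty ∧ IsChain (· ≤ ·) (↑ω : Set P) ∧ ∀ a ∈ ω, p < a ∧ a < r)) := by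
    ext σ
    simp only [hT, Finset.mem_filter, Finset.mem_univ, true_and, Finset.mem_insert]
    constructor
    · rintro ⟨hc, hm⟩
      rcases σ.eq_empty_or_nonempty with h | h
      · exact Or.inl h
      · exact Or.inr ⟨h, hc, hm⟩
    · rintro (rfl | ⟨_, hc, hm⟩)
      · exact ⟨by simp [Set.subsingleton_empty.isChain], by simp⟩
      · exact ⟨hc, hm⟩
  have hnotmem : (∅ : Finset P) ∉ Finset.univ.filter (fun ω : Finset P =>
      ω.Nonempty ∧ IsChain (· ≤ ·) (↑ω : Set P) ∧ ∀ a ∈ ω, p < a ∧ a < r) := by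
    simp [Finset.not_nonempty_empty]
  rw [hTsplit, Finset.sum_insert hnotmem]
  have : ∀ ω ∈ Finset.univ.filter (fun ω : Finset P =>
      ω.Nonempty ∧ IsChain (· ≤ ·) (↑ω : Set P) ∧ ∀ a ∈ ω, p < a ∧ a < r),
      (-1 : ℤ) ^ ω.card = -((-1 : ℤ) ^ (ω.card - 1)) := by
    intro ω hω
    simp only [Finset.mem_filter] at hω
    have hcard : 1 ≤ ω.card := Finset.card_pos.mpr hω.2.1
    conv_lhs => rw [show ω.card = (ω.card - 1) + 1 from by omega]
    rw [pow_succ]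
    ring
  rw [Finset.sum_congr rfl this, Finset.sum_neg_distrib, cSum,
    Finset.card_empty, pow_zero]
  ring

/-- Recursion for `cSum`. -/
lemma cSum_rec (p q : P) (hpq : p < q) :
    cSum p q = ∑ r ∈ Finset.univ.filter (fun r : P => p < r ∧ r < q), (1 - cSum p r) := by
  rw [cSum]
  rw [← Finset.sum_fiberwise_of_maps_to (g := topOf q)
      (t := Finset.univ.filter (fun r : P => p < r ∧ r < q)) ?_ (fun ω => (-1 : ℤ) ^ (ω.card - 1))]
  · refine Finset.sum_congr rfl (fun r hr => ?_)
    simp only [Finset.mem_filter, Finset.mem_univ, true_and] at hr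
    exact fiber_sum p q r hr.1 hr.2
  · intro ω hω
    simp only [Finset.mem_filter, Finset.mem_univ, true_and] at hω ⊢
    obtain ⟨hrmem, _⟩ := topOf_mem_spec hω
    exact hω.2.2 _ hrmem

end Aux

/-- **Möbius function equals reduced Euler characteristic of the order complex.**
For a finite poset `P` with minimal element `bot` and elements `p < q`, the Möbius
function value `mu p q` equals the reduced Euler characteristic of the complex of
chains in the open interval `(p, q)`: the sum over nonempty chains `ω` of
`(-1)^(|ω| - 1)`, with the empty chain contributing `-1`. -/
theorem mobius_eq_reduced_euler_char
    {P : Type*} [PartialOrder P] [Fintype P]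
    (bot : P) (hbot : ∀ p : P, bot ≤ p)
    (mu : P → P → ℤ)
    (hmu_refl : ∀ p : P, mu p p = 1)
    (hmu_rec : ∀ p q : P, p < q →
      ∑ r ∈ Finset.univ.filter (fun r : P => p ≤ r ∧ r ≤ q), mu p r = 0)
    (p q : P) (hpq : p < q) :
    mu p q =
      (∑ ω ∈ Finset.univ.filter
          (fun ω : Finset P =>
            ω.Nonempty ∧ IsChain (· ≤ ·) (↑ω : Set P) ∧ ∀ a ∈ ω, p < a ∧ a < q),
        (-1 : ℤ) ^ (ω.card - 1)) - 1 := by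
  have main : ∀ q : P, ∀ p : P, p < q → mu p q = cSum p q - 1 := by
    intro q
    induction q using WellFoundedLT.induction with
    | _ q IH =>
      intro p hpq
      have hsplit : Finset.univ.filter (fun r : P => p ≤ r ∧ r ≤ q) =
          insert p (insert q (Finset.univ.filter (fun r : P => p < r ∧ r < q))) := by
        ext r
        simp only [Finset.mem_filter, Finset.mem_univ, true_and, Finset.mem_insert]
        constructor
        · rintro ⟨h1, h2⟩
          rcases eq_or_ne r p with h | h
          · exact Or.inl h
          · rcases eq_or_ne r q with h' | h'
            · exact Or.inr (Or.inl h')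
            · exact Or.inr (Or.inr ⟨lt_of_le_of_ne h1 (Ne.symm h), lt_of_le_of_ne h2 h'⟩)
        · rintro (rfl | rfl | ⟨h1, h2⟩)
          · exact ⟨le_refl _, hpq.le⟩
          · exact ⟨hpq.le, le_refl _⟩
          · exact ⟨h1.le, h2.le⟩
      have hp_notmem : p ∉ insert q (Finset.univ.filter (fun r : P => p < r ∧ r < q)) := by
        simp only [Finset.mem_insert, Finset.mem_filter, Finset.mem_univ, true_and]
        push_neg
        exact ⟨hpq.ne, fun h => absurd h (lt_irrefl p)⟩
      have hq_notmem : q ∉ Finset.univ.filter (fun r : P => p < r ∧ r < q) := by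
        simp only [Finset.mem_filter, Finset.mem_univ, true_and]
        push_neg
        exact fun _ => lt_irrefl q
      have hrec := hmu_rec p q hpq
      rw [hsplit, Finset.sum_insert hp_notmem, Finset.sum_insert hq_notmem, hmu_refl] at hrec
      have hIH : ∀ r ∈ Finset.univ.filter (fun r : P => p < r ∧ r < q),
          mu p r = cSum p r - 1 := by
        intro r hr
        simp only [Finset.mem_filter, Finset.mem_univ, true_and] at hr
        exact IH r hr.2 p hr.1
      rw [Finset.sum_congr rfl hIH] at hrec
      have hc := cSum_rec p q hpq
      rw [Finset.sum_sub_distrib] at hrec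
      rw [Finset.sum_sub_distrib] at hc
      simp only [Finset.sum_const, nsmul_eq_mul, mul_one] at hrec hc
      linarith [hrec, hc]
  have := main q p hpq
  rw [this, cSum]
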